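/- The Courant (Dorfman) bracket on sections of TM ⊕ T*M, defined by (X+ξ)∘(Y+η) = [X,Y] + (L_X η − i_Y dξ), satisfies the Leibniz Jacobi identity: (u∘v)∘w = u∘(v∘w) − v∘(u∘w) for all sections u, v, w. -/
import Mathlib


/-- The Courant (Dorfman) bracket
`(X+ξ)∘(Y+η) = [X,Y] + (L_X η − i_Y dξ)` on sections of `TM ⊕ T*M` satisfies
the Leibniz Jacobi identity `(u∘v)∘w = u∘(v∘w) − v∘(u∘w)`.

Formalized abstractly via Cartan calculus: `C` plays the role of smooth
functions, `Xv` of vector fields (a Lie algebra), `Ω1` and `Ω2` of 1- and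
2-forms, with Lie derivatives `L1, L2`, differentials `d0, d1`, contractions
`i0, i1` and the action `act` of vector fields on functions, subject to the
standard Cartan calculus identities. -/
theorem dorfman_leibniz_jacobi
    {C Xv Ω1 Ω2 : Type*} [AddCommGroup C] [LieRing Xv]
    [AddCommGroup Ω1] [AddCommGroup Ω2]
    (act : Xv → C → C) (L1 : Xv → Ω1 → Ω1) (L2 : Xv → Ω2 → Ω2)
    (d0 : C → Ω1) (d1 : Ω1 → Ω2) (i0 : Xv → Ω1 → C) (i1 : Xv → Ω2 → Ω1)
    -- additivity of the operations
    (L1_add : ∀ X a b, L1 X (a + b) = L1 X a + L1 X b)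
    (i1_add : ∀ X a b, i1 X (a + b) = i1 X a + i1 X b)
    (i0_add : ∀ X a b, i0 X (a + b) = i0 X a + i0 X b)
    (d1_add : ∀ a b, d1 (a + b) = d1 a + d1 b)
    -- standard Cartan calculus identities
    (cartan1 : ∀ X ω, L1 X ω = i1 X (d1 ω) + d0 (i0 X ω))
    (cartan2_exact : ∀ X ω, L2 X (d1 ω) = d1 (i1 X (d1 ω)))  -- L_X = i_X d + d i_X with d² = 0
    (dL_comm : ∀ X ω, d1 (L1 X ω) = L2 X (d1 ω))
    (LL : ∀ X Y ω, L1 X (L1 Y ω) - L1 Y (L1 X ω) = L1 ⁅X, Y⁆ ω)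
    (Li : ∀ X Z β, L1 X (i1 Z β) - i1 Z (L2 X β) = i1 ⁅X, Z⁆ β)
    -- the Dorfman bracket on sections of TM ⊕ T*M
    (dorf : Xv × Ω1 → Xv × Ω1 → Xv × Ω1)
    (hdorf : ∀ u v, dorf u v = (⁅u.1, v.1⁆, L1 u.1 v.2 - i1 v.1 (d1 u.2))) :
    ∀ u v w : Xv × Ω1,
      dorf (dorf u v) w = dorf u (dorf v w) - dorf v (dorf u w) := by
  have d1_sub : ∀ a b, d1 (a - b) = d1 a - d1 b :=
    fun a b => (AddMonoidHom.mk' d1 d1_add).map_sub a b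
  have i1_sub : ∀ X a b, i1 X (a - b) = i1 X a - i1 X b :=
    fun X a b => (AddMonoidHom.mk' (i1 X) (i1_add X)).map_sub a b
  have L1_sub : ∀ X a b, L1 X (a - b) = L1 X a - L1 X b :=
    fun X a b => (AddMonoidHom.mk' (L1 X) (L1_add X)).map_sub a b
  rintro ⟨X, ξ⟩ ⟨Y, η⟩ ⟨Z, ζ⟩
  simp only [hdorf, Prod.mk_sub_mk, Prod.mk.injEq]
  constructor
  · exact lie_lie X Y Z
  · rw [d1_sub, dL_comm, ← cartan2_exact, i1_sub, ← LL X Y ζ,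
      ← Li X Z (d1 η), ← Li Y Z (d1 ξ), L1_sub, L1_sub]
    abel
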